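/- Let ν > 0 and let ε satisfy 0 < ε < min(1/(2ν), exp(−36/23)), and set γ_ε = νε. Suppose that for some t ∈ (0,∞) and z ∈ ℝ we have |p(z,t) − 1/2| ≤ (5 + γ_ε)/12, and let w ∈ ℝ satisfy |z − w| ≤ ε. Then |p(z,t) − p(w,t)| ≥ |z − w| / (48 ε |log ε|). -/

import Mathlib

/-- The one-dimensional travelling wavefront `p(x,t) = (exp(-(x+νt)/ε)+1)⁻¹`. -/
noncomputable def wavefront (ν ε x t : ℝ) : ℝ := (Real.exp (-(x + ν * t) / ε) + 1)⁻¹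

set_option maxHeartbeats 1000000 in
/-- lower bound on the slope of the wavefront profile near the
interface where `p` takes values close to `1/2`. -/
theorem wavefront_slope (ν ε : ℝ) (hν : 0 < ν) (hε : 0 < ε)
    (hε' : ε < min (1 / (2 * ν)) (Real.exp (-(36 / 23))))
    (t z : ℝ) (ht : 0 < t)
    (hz : |wavefront ν ε z t - 1 / 2| ≤ (5 + ν * ε) / 12)
    (w : ℝ) (hw : |z - w| ≤ ε) :
    |z - w| / (48 * ε * |Real.log ε|) ≤ |wavefront ν ε z t - wavefront ν ε w t| := by
  obtain ⟨hε1, hε2⟩ := lt_min_iff.mp hε'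
  set a := -(z + ν * t) / ε with ha
  set b := -(w + ν * t) / ε with hb
  set A := Real.exp a with hA'
  set B := Real.exp b with hB'
  have hA : 0 < A := Real.exp_pos _
  have hB : 0 < B := Real.exp_pos _
  have hfz : wavefront ν ε z t = (A + 1)⁻¹ := rfl
  have hfw : wavefront ν ε w t = (B + 1)⁻¹ := rfl
  -- relation b - a = (z - w)/ε
  have hba : b - a = (z - w) / ε := by
    rw [ha, hb]; field_simp; ring
  have hBA : B = A * Real.exp (b - a) := by
    rw [hA', hB', ← Real.exp_add]; ring_nf
  have hAB : A = B * Real.exp (a - b) := by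
    rw [hA', hB', ← Real.exp_add]; ring_nf
  clear_value A B a b
  -- ν ε < 1/2
  have hνε : ν * ε < 1 / 2 := by
    have h1 := mul_lt_mul_of_pos_left hε1 hν
    have h2 : ν * (1 / (2 * ν)) = 1 / 2 := by field_simp
    linarith
  -- bounds on A
  have hA1 : (A + 1) * (A + 1)⁻¹ = 1 := mul_inv_cancel₀ (by positivity)
  have hzabs := abs_le.mp hz
  rw [hfz] at hzabs
  have hAub : A ≤ 23 := by nlinarith [hzabs.1, hzabs.2]
  have hAlb : 1 / 23 ≤ A := by nlinarith [hzabs.1, hzabs.2]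
  -- bound on log
  have hlog : 36 / 23 ≤ |Real.log ε| := by
    have h3 : Real.log ε < -(36 / 23) := by
      have := Real.log_lt_log hε hε2
      rwa [Real.log_exp] at this
    rw [abs_of_neg (by linarith)]
    linarith
  have hlogpos : (0:ℝ) < |Real.log ε| := by linarith
  have hba1 : |b - a| ≤ 1 := by
    rw [hba, abs_div, abs_of_pos hε, div_le_one hε]
    exact hw
  have he : Real.exp 1 < 2.7182818286 := Real.exp_one_lt_d9
  -- the difference formula
  have hden : (0:ℝ) < (A + 1) * (B + 1) := by positivity
  have hdiff : wavefront ν ε z t - wavefront ν ε w t = (B - A) / ((A + 1) * (B + 1)) := by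
    rw [hfz, hfw]; field_simp; ring
  have hdabs : |wavefront ν ε z t - wavefront ν ε w t| = |B - A| / ((A + 1) * (B + 1)) := by
    rw [hdiff, abs_div, abs_of_pos hden]
  -- key inequality
  have key : 23 * |b - a| * ((A + 1) * (B + 1)) ≤ 1728 * |B - A| := by
    rcases le_total a b with hab | hab
    · have hd0 : 0 ≤ b - a := by linarith
      have hup : b - a ≤ 1 := by rw [abs_of_nonneg hd0] at hba1; exact hba1
      have hexp2 : Real.exp (b - a) ≤ Real.exp 1 := Real.exp_le_exp.mpr hup
      have hBge : A * (b - a + 1) ≤ B := by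
        rw [hBA]
        exact mul_le_mul_of_nonneg_left (by linarith [Real.add_one_le_exp (b - a)]) hA.le
      have hBle : B ≤ A * 2.7182818286 := by
        rw [hBA]
        exact mul_le_mul_of_nonneg_left (by linarith) hA.le
      have hABle : A ≤ B := by nlinarith [mul_nonneg hd0 hA.le]
      rw [abs_of_nonneg hd0, abs_of_nonneg (by linarith : (0:ℝ) ≤ B - A)]
      nlinarith [mul_nonneg (mul_nonneg hd0 (by linarith : (0:ℝ) ≤ A * 2.7182818286 - B)) (by linarith : (0:ℝ) ≤ A + 1),
        mul_nonneg hd0 (mul_nonneg (by linarith : (0:ℝ) ≤ 23 - A) (by linarith : (0:ℝ) ≤ A - 1/23)),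
        mul_nonneg hd0 hA.le, hBge]
    · have hd0 : 0 ≤ a - b := by linarith
      have hup : a - b ≤ 1 := by
        rw [abs_sub_comm, abs_of_nonneg hd0] at hba1; exact hba1
      have hexp2 : Real.exp (a - b) ≤ Real.exp 1 := Real.exp_le_exp.mpr hup
      have hAge : B * (a - b + 1) ≤ A := by
        rw [hAB]
        exact mul_le_mul_of_nonneg_left (by linarith [Real.add_one_le_exp (a - b)]) hB.le
      have hAle : A ≤ B * 2.7182818286 := by
        rw [hAB]
        exact mul_le_mul_of_nonneg_left (by linarith) hB.le
      have hBAle : B ≤ A := by nlinarith [mul_nonneg hd0 hB.le]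
      rw [abs_sub_comm b a, abs_of_nonneg hd0,
        abs_of_nonpos (by linarith : B - A ≤ 0)]
      have hBub : B ≤ 23 := le_trans hBAle hAub
      have hBlb : (1:ℝ) / 62.53 ≤ B := by nlinarith
      nlinarith [mul_nonneg (mul_nonneg hd0 (by linarith : (0:ℝ) ≤ B * 2.7182818286 - A)) (by linarith : (0:ℝ) ≤ B + 1),
        mul_nonneg hd0 (mul_nonneg (by linarith : (0:ℝ) ≤ 23 - B) (by linarith : (0:ℝ) ≤ B - 1/62.53)),
        mul_nonneg hd0 hB.le, hAge]
  -- conclude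
  have h48 : 0 < 48 * ε * |Real.log ε| := by positivity
  rw [hdabs, div_le_div_iff₀ h48 hden]
  have hzw : |z - w| = ε * |b - a| := by
    rw [hba, abs_div, abs_of_pos hε]; field_simp
  rw [hzw]
  nlinarith [mul_nonneg (mul_nonneg hε.le (abs_nonneg (B - A)))
      (by linarith : (0:ℝ) ≤ |Real.log ε| - 36/23),
    mul_le_mul_of_nonneg_left key hε.le]
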